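/- (Boole's Inequality) Let S be a zerosumfree semiring with 1 + 1 complemented, T an ordered ring, and p : S → T a probability function. If s₁, ..., sₙ ∈ S are complemented, then p(s₁ + ⋯ + sₙ) ≤ p(s₁) + ⋯ + p(sₙ). -/

import Mathlib

/-- (Boole's Inequality) Let `S` be a zerosumfree commutative semiring with `1 + 1`
complemented, `T` an ordered commutative ring, and `p : S → T` a probability function.
If `s 0, …, s (n-1)` are complemented, then `p (∑ᵢ s i) ≤ ∑ᵢ p (s i)`. -/
theorem boole_inequality
    {S T : Type*} [CommSemiring S] [CommRing T] [PartialOrder T] [IsOrderedRing T]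
    (hzs : ∀ a b : S, a + b = 0 → a = 0 ∧ b = 0)
    (h2 : ∃ c : S, (1 + 1) * c = 0 ∧ (1 + 1) + c = 1)
    (p : S → T)
    (hnonneg : ∀ s : S, 0 ≤ p s)
    (hone : p 1 = 1)
    (hadd : ∀ a b : S, a * b = 0 → p (a + b) = p a + p b)
    (n : ℕ) (s : Fin n → S)
    (hc : ∀ i, ∃ c, s i * c = 0 ∧ s i + c = 1) :
    p (∑ i, s i) ≤ ∑ i, p (s i) := by
  obtain ⟨c, h2a, h2b⟩ := h2
  have hc0 : c = 0 := (hzs c c (by rwa [add_mul, one_mul] at h2a)).1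
  have h11 : (1 : S) + 1 = 1 := by rwa [hc0, add_zero] at h2b
  have hdup : ∀ a : S, a + a = a := by
    intro a
    calc a + a = (1 + 1) * a := by rw [add_mul, one_mul]
    _ = a := by rw [h11, one_mul]
  have hp0 : p 0 = 0 := by
    have h := hadd 0 0 (by ring)
    rw [add_zero] at h
    exact (left_eq_add.mp h)
  have hone1 : ∀ a : S, (∃ c, a * c = 0 ∧ a + c = 1) → (1 : S) + a = 1 := by
    rintro a ⟨d, hd0, hd1⟩
    calc (1 : S) + a = (a + d) + a := by rw [hd1]
    _ = (a + a) + d := by ring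
    _ = a + d := by rw [hdup]
    _ = 1 := hd1
  have key : ∀ a b : S, (∃ a', a * a' = 0 ∧ a + a' = 1) → (1 : S) + b = 1 →
      p (a + b) ≤ p a + p b := by
    rintro a b ⟨a', ha0, ha1⟩ h1b
    have hsplit : a + b = a + a' * b := by
      calc a + b = a + (a + a') * b := by rw [ha1, one_mul]
      _ = a * (1 + b) + a' * b := by ring
      _ = a + a' * b := by rw [h1b, mul_one]
    have hpab : p (a + b) = p a + p (a' * b) := by
      rw [hsplit]
      exact hadd a (a' * b) (by rw [← mul_assoc, ha0, zero_mul])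
    have hpb : p b = p (a * b) + p (a' * b) := by
      have h := hadd (a * b) (a' * b) (by
        have h' : (a * b) * (a' * b) = (a * a') * (b * b) := by ring
        rw [h', ha0, zero_mul])
      rw [← add_mul, ha1, one_mul] at h
      exact h
    rw [hpab, hpb]
    exact add_le_add_right (le_add_of_nonneg_left (hnonneg (a * b))) _
  have hone_sum : ∀ m (t : Fin m → S), (∀ i, (1 : S) + t i = 1) →
      (1 : S) + ∑ i, t i = 1 := by
    intro m
    induction m with
    | zero => intro t _; simp
    | succ m ih =>
      intro t ht
      rw [Fin.sum_univ_succ, ← add_assoc, ht 0,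
        ih (fun i => t i.succ) (fun i => ht i.succ)]
  have main : ∀ m (t : Fin m → S), (∀ i, ∃ c, t i * c = 0 ∧ t i + c = 1) →
      p (∑ i, t i) ≤ ∑ i, p (t i) := by
    intro m
    induction m with
    | zero => intro t _; simp [hp0]
    | succ m ih =>
      intro t ht
      rw [Fin.sum_univ_succ, Fin.sum_univ_succ]
      have h1 : p (t 0 + ∑ i : Fin m, t i.succ) ≤ p (t 0) + p (∑ i : Fin m, t i.succ) :=
        key _ _ (ht 0) (hone_sum m _ (fun i => hone1 _ (ht i.succ)))
      have h2 := ih (fun i => t i.succ) (fun i => ht i.succ)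
      calc p (t 0 + ∑ i : Fin m, t i.succ)
          ≤ p (t 0) + p (∑ i : Fin m, t i.succ) := h1
        _ ≤ p (t 0) + ∑ i : Fin m, p (t i.succ) := add_le_add_right h2 _
  exact main n s hc
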